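/- arXiv:0711.2114 — 6 statements merged into one kernel-verified Lean document; each statement's English description precedes it below -/
import Mathlib

section
/- The Möbius function of the lattice Q(N) is given by μ((A,A'),(B,B')) = (-1)^{|B\A| + |A'\B'|} if (A,A') ⊑ (B,B') and A'∩B = ∅, and μ((A,A'),(B,B')) = 0 otherwise. -/
open Finset


lemma sum_first {V : Type*} [Fintype V] [DecidableEq V]
    (A B A' : Finset V) (hA : Disjoint A A') (hAB : A ⊆ B) :
    ∑ T ∈ univ.filter (fun T : Finset V => A ⊆ T ∧ T ⊆ B ∧ T ∩ A' = ∅),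
      (-1 : ℤ) ^ (T \ A).card
      = if (B \ A) \ A' = ∅ then 1 else 0 := by
  rw [← Finset.sum_powerset_neg_one_pow_card]
  refine Finset.sum_nbij' (fun T => T \ A) (fun S => A ∪ S) ?_ ?_ ?_ ?_ ?_
  · intro T hT
    simp only [mem_filter, mem_univ, true_and] at hT
    simp only [mem_powerset]
    intro x hx
    simp only [mem_sdiff] at hx ⊢
    refine ⟨⟨hT.2.1 hx.1, hx.2⟩, ?_⟩
    intro hxA'
    have : x ∈ T ∩ A' := mem_inter.2 ⟨hx.1, hxA'⟩
    rw [hT.2.2] at this; exact absurd this (notMem_empty x)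
  · intro S hS
    simp only [mem_powerset] at hS
    simp only [mem_filter, mem_univ, true_and]
    refine ⟨subset_union_left, ?_, ?_⟩
    · apply union_subset hAB
      exact hS.trans ((sdiff_subset).trans sdiff_subset)
    · rw [← Finset.disjoint_iff_inter_eq_empty]
      rw [Finset.disjoint_union_left]; refine ⟨hA, ?_⟩
      refine Finset.disjoint_left.2 fun x hx hxA' => ?_
      have := hS hx
      simp only [mem_sdiff] at this
      exact this.2 hxA'
  · intro T hT
    simp only [mem_filter, mem_univ, true_and] at hT
    exact union_sdiff_of_subset hT.1
  · intro S hS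
    simp only [mem_powerset] at hS
    apply union_sdiff_cancel_left
    refine Finset.disjoint_left.2 fun x hx hxS => ?_
    have := hS hxS
    simp only [mem_sdiff] at this
    exact this.1.2 hx
  · intro T hT; rfl

lemma sum_second {V : Type*} [Fintype V] [DecidableEq V]
    (A' B' : Finset V) (hB' : B' ⊆ A') :
    ∑ T ∈ univ.filter (fun T : Finset V => B' ⊆ T ∧ T ⊆ A'),
      (-1 : ℤ) ^ (A' \ T).card
      = if A' \ B' = ∅ then 1 else 0 := by
  rw [← Finset.sum_powerset_neg_one_pow_card]
  refine Finset.sum_nbij' (fun T => A' \ T) (fun S => A' \ S) ?_ ?_ ?_ ?_ ?_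
  · intro T hT
    simp only [mem_filter, mem_univ, true_and] at hT
    simp only [mem_powerset]
    exact sdiff_subset_sdiff (le_refl _) hT.1
  · intro S hS
    simp only [mem_powerset] at hS
    simp only [mem_filter, mem_univ, true_and]
    refine ⟨?_, sdiff_subset⟩
    intro x hx
    simp only [mem_sdiff]
    refine ⟨hB' hx, fun hxS => ?_⟩
    have := hS hxS
    simp only [mem_sdiff] at this
    exact this.2 hx
  · intro T hT
    simp only [mem_filter, mem_univ, true_and] at hT
    exact Finset.sdiff_sdiff_eq_self hT.2
  · intro S hS
    simp only [mem_powerset] at hS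
    exact Finset.sdiff_sdiff_eq_self (hS.trans sdiff_subset)
  · intro T hT; rfl
/-- the Möbius function of Q(N) is
μ((A,A'),(B,B')) = (-1)^{|B\A|+|A'\B'|} if (A,A') ⊑ (B,B') and A'∩B = ∅, else 0. -/
theorem stmt_8 (V : Type*) [Fintype V] [DecidableEq V]
    (μ : Finset V × Finset V → Finset V × Finset V → ℤ)
    (hrefl : ∀ p : Finset V × Finset V, Disjoint p.1 p.2 → μ p p = 1)
    (hrec : ∀ p q : Finset V × Finset V, Disjoint p.1 p.2 → Disjoint q.1 q.2 →
      (p.1 ⊆ q.1 ∧ q.2 ⊆ p.2) → p ≠ q →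
      μ p q = -∑ t ∈ univ.filter (fun t : Finset V × Finset V =>
        Disjoint t.1 t.2 ∧ (p.1 ⊆ t.1 ∧ t.2 ⊆ p.2) ∧ (t.1 ⊆ q.1 ∧ q.2 ⊆ t.2) ∧ t ≠ q),
        μ p t)
    (hzero : ∀ p q : Finset V × Finset V, Disjoint p.1 p.2 → Disjoint q.1 q.2 →
      ¬(p.1 ⊆ q.1 ∧ q.2 ⊆ p.2) → μ p q = 0) :
    ∀ A A' B B' : Finset V, Disjoint A A' → Disjoint B B' →
      μ (A, A') (B, B') =
        if (A ⊆ B ∧ B' ⊆ A') ∧ A' ∩ B = ∅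
        then (-1 : ℤ) ^ ((B \ A).card + (A' \ B').card) else 0 := by
  intro A A'
  suffices H : ∀ n (B B' : Finset V), Disjoint A A' → Disjoint B B' →
      (B \ A).card + (A' \ B').card ≤ n →
      μ (A, A') (B, B') =
        if (A ⊆ B ∧ B' ⊆ A') ∧ A' ∩ B = ∅
        then (-1 : ℤ) ^ ((B \ A).card + (A' \ B').card) else 0 by
    intro B B' hA hB; exact H _ B B' hA hB le_rfl
  intro n
  induction n using Nat.strong_induction_on with
  | _ n IH =>
    intro B B' hA hB hle
    by_cases hord : A ⊆ B ∧ B' ⊆ A'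
    · by_cases heq : (A, A') = (B, B')
      · obtain ⟨h1, h2⟩ := Prod.mk.injEq A A' B B' ▸ heq
        subst h1; subst h2
        rw [hrefl (A, A') hA]
        rw [if_pos ⟨hord, by rw [inter_comm, Finset.disjoint_iff_inter_eq_empty.1 hA]⟩]
        simp
      · have hμ := hrec (A, A') (B, B') hA hB hord heq
        set F := univ.filter (fun t : Finset V × Finset V =>
          Disjoint t.1 t.2 ∧ (A ⊆ t.1 ∧ t.2 ⊆ A') ∧ (t.1 ⊆ B ∧ B' ⊆ t.2) ∧ t ≠ (B, B'))
          with hF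
        set f : Finset V × Finset V → ℤ := fun t =>
          if A' ∩ t.1 = ∅ then (-1 : ℤ) ^ ((t.1 \ A).card + (A' \ t.2).card) else 0 with hf
        -- each term of the recursion sum equals f t
        have hterm : ∀ t ∈ F, μ (A, A') t = f t := by
          intro t ht
          rw [hF, mem_filter] at ht
          obtain ⟨-, htd, ⟨htA, htA'⟩, ⟨htB, htB'⟩, htne⟩ := ht
          have hc1 : (t.1 \ A).card ≤ (B \ A).card :=
            card_le_card (sdiff_subset_sdiff htB le_rfl)
          have hc2 : (A' \ t.2).card ≤ (A' \ B').card :=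
            card_le_card (sdiff_subset_sdiff le_rfl htB')
          have hlt : (t.1 \ A).card + (A' \ t.2).card < (B \ A).card + (A' \ B').card := by
            rcases lt_or_eq_of_le hc1 with h | h
            · omega
            rcases lt_or_eq_of_le hc2 with h' | h'
            · omega
            exfalso
            have e1 : t.1 \ A = B \ A :=
              eq_of_subset_of_card_le (sdiff_subset_sdiff htB le_rfl) (le_of_eq h.symm)
            have e2 : A' \ t.2 = A' \ B' :=
              eq_of_subset_of_card_le (sdiff_subset_sdiff le_rfl htB') (le_of_eq h'.symm)
            have eB : t.1 = B := by
              have := union_sdiff_of_subset htA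
              rw [e1] at this
              rw [← this, union_sdiff_of_subset hord.1]
            have eB' : t.2 = B' := by
              have h3 : A' \ (A' \ t.2) = t.2 := Finset.sdiff_sdiff_eq_self htA'
              rw [e2] at h3
              rw [← h3, Finset.sdiff_sdiff_eq_self hord.2]
            exact htne (Prod.ext eB eB')
          have := IH _ (lt_of_lt_of_le hlt hle) t.1 t.2 hA htd le_rfl
          rw [Prod.mk.eta] at this
          rw [this, hf]
          by_cases hc : A' ∩ t.1 = ∅
          · exact (if_pos ⟨⟨htA, htA'⟩, hc⟩).trans (if_pos hc).symm
          · exact (if_neg (fun h : _ ∧ _ => hc h.2)).trans (if_neg hc).symm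
        rw [hμ, Finset.sum_congr rfl hterm]
        -- the full interval
        set F₀ := univ.filter (fun t : Finset V × Finset V =>
          Disjoint t.1 t.2 ∧ (A ⊆ t.1 ∧ t.2 ⊆ A') ∧ (t.1 ⊆ B ∧ B' ⊆ t.2)) with hF₀
        have hFerase : F = F₀.erase (B, B') := by
          ext t
          simp only [hF, hF₀, mem_filter, mem_erase, mem_univ, true_and]
          tauto
        have hq0 : (B, B') ∈ F₀ := by
          simp only [hF₀, mem_filter, mem_univ, true_and]
          exact ⟨hB, ⟨hord.1, hord.2⟩, subset_rfl, subset_rfl⟩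
        have hsum0 : ∑ t ∈ F₀, f t =
            (if (B \ A) \ A' = ∅ then 1 else 0) * (if A' \ B' = ∅ then (1 : ℤ) else 0) := by
          rw [hf]
          rw [← Finset.sum_filter]
          have hprod : F₀.filter (fun t => A' ∩ t.1 = ∅) =
              (univ.filter (fun T : Finset V => A ⊆ T ∧ T ⊆ B ∧ T ∩ A' = ∅)) ×ˢ
              (univ.filter (fun T : Finset V => B' ⊆ T ∧ T ⊆ A')) := by
            ext ⟨T, T'⟩
            simp only [hF₀, mem_filter, filter_filter, mem_product, mem_univ, true_and]
            constructor
            · rintro ⟨⟨hd, ⟨h1, h2⟩, h3, h4⟩, h5⟩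
              exact ⟨⟨h1, h3, by rw [inter_comm]; exact h5⟩, h4, h2⟩
            · rintro ⟨⟨h1, h3, h5⟩, h4, h2⟩
              have hd : Disjoint T T' := by
                refine Finset.disjoint_left.2 fun x hx hx' => ?_
                have : x ∈ T ∩ A' := mem_inter.2 ⟨hx, h2 hx'⟩
                rw [h5] at this; exact absurd this (notMem_empty x)
              exact ⟨⟨hd, ⟨h1, h2⟩, h3, h4⟩, by rw [inter_comm]; exact h5⟩
          rw [hprod, Finset.sum_product]
          rw [← sum_first A B A' hA hord.1, ← sum_second A' B' hord.2, Finset.sum_mul_sum]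
          refine Finset.sum_congr rfl fun T hT => Finset.sum_congr rfl fun T' hT' => ?_
          rw [pow_add]
        have hG0 : (if (B \ A) \ A' = ∅ then (1 : ℤ) else 0) *
            (if A' \ B' = ∅ then (1 : ℤ) else 0) = 0 := by
          by_cases h1 : (B \ A) \ A' = ∅ <;> by_cases h2 : A' \ B' = ∅ <;>
            simp [h1, h2]
          exfalso
          have hA'B' : A' = B' := subset_antisymm (sdiff_eq_empty_iff_subset.1 h2) hord.2
          have hAB : B ⊆ A := by
            intro x hx
            by_contra hxA
            have hx1 : x ∈ B \ A := mem_sdiff.2 ⟨hx, hxA⟩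
            have hx2 : x ∈ A' := by
              by_contra hxA'
              have : x ∈ (B \ A) \ A' := mem_sdiff.2 ⟨hx1, hxA'⟩
              rw [h1] at this; exact absurd this (notMem_empty x)
            rw [hA'B'] at hx2
            exact absurd hx (Finset.disjoint_right.1 hB hx2)
          exact heq (Prod.ext (subset_antisymm hord.1 hAB) hA'B')
        have hsplit : ∑ t ∈ F, f t + f (B, B') = ∑ t ∈ F₀, f t := by
          rw [hFerase]; exact Finset.sum_erase_add F₀ f hq0
        have hfq : ∑ t ∈ F, f t = -f (B, B') := by
          rw [hsum0, hG0] at hsplit; linarith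
        rw [hfq, neg_neg, hf]
        by_cases hc : A' ∩ B = ∅
        · rw [if_pos ⟨hord, hc⟩]; exact if_pos hc
        · rw [if_neg (fun h => hc h.2)]; exact if_neg hc
    · rw [hzero (A, A') (B, B') hA hB hord, if_neg (fun h => hord h.1)]
end

section
/- Let v be a CPT-type bi-capacity, v(A,B) = ν₁(A) - ν₂(B) for capacities ν₁, ν₂ on N. Then the Möbius transform m of v on Q(N) satisfies: m(A, Aᶜ) = m^{ν₁}(A) for all nonempty A ⊆ N; m(∅,B) = m^{conj(ν₂)}(Bᶜ) for all B ⊊ N, where conj(ν₂)(A) = ν₂(N) - ν₂(Aᶜ); m(∅,N) = -ν₂(N); and m(A,B) = 0 whenever A ≠ ∅ and B ≠ Aᶜ. -/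
open Finset

/-- The Möbius transform of a function on Q(N). -/
def biMobius {V : Type*} [Fintype V] [DecidableEq V]
    (v : Finset V × Finset V → ℝ) (A A' : Finset V) : ℝ :=
  ∑ B ∈ A.powerset, ∑ B' ∈ (Aᶜ).powerset.filter (fun B' => A' ⊆ B'),
    (-1 : ℝ) ^ ((A \ B).card + (B' \ A').card) * v (B, B')

/-- The classical Möbius transform of a set function. -/
def setMobius {V : Type*} [DecidableEq V] (ν : Finset V → ℝ) (A : Finset V) : ℝ :=
  ∑ B ∈ A.powerset, (-1 : ℝ) ^ ((A \ B).card) * ν B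

lemma sum_powerset_compl' {V : Type*} [DecidableEq V] (s : Finset V) (f : Finset V → ℝ) :
    ∑ t ∈ s.powerset, f (s \ t) = ∑ t ∈ s.powerset, f t := by
  apply Finset.sum_nbij' (fun t => s \ t) (fun t => s \ t)
  · intro t _; exact mem_powerset.2 sdiff_subset
  · intro t _; exact mem_powerset.2 sdiff_subset
  · intro t ht; exact Finset.sdiff_sdiff_eq_self (mem_powerset.1 ht)
  · intro t ht; exact Finset.sdiff_sdiff_eq_self (mem_powerset.1 ht)
  · intro t _; rfl

lemma alt_sum' {V : Type*} [DecidableEq V] (s : Finset V) :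
    ∑ t ∈ s.powerset, (-1 : ℝ) ^ t.card = if s = ∅ then 1 else 0 := by
  have := congrArg (fun z : ℤ => (z : ℝ)) (@Finset.sum_powerset_neg_one_pow_card V _ s)
  push_cast at this
  simpa using this

lemma alt_sum {V : Type*} [DecidableEq V] (s : Finset V) :
    ∑ t ∈ s.powerset, (-1 : ℝ) ^ ((s \ t).card) = if s = ∅ then 1 else 0 := by
  rw [sum_powerset_compl' s (fun t => (-1 : ℝ) ^ t.card), alt_sum']

lemma reindex {V : Type*} [DecidableEq V] (S A' : Finset V) (hA' : A' ⊆ S)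
    (f : Finset V → ℝ) :
    ∑ B' ∈ S.powerset.filter (fun B' => A' ⊆ B'), f B'
      = ∑ C ∈ (S \ A').powerset, f (C ∪ A') := by
  apply Finset.sum_nbij' (fun B' => B' \ A') (fun C => C ∪ A')
  · intro B' hB'
    simp only [mem_filter, mem_powerset] at hB'
    exact mem_powerset.2 (sdiff_subset_sdiff hB'.1 le_rfl)
  · intro C hC
    simp only [mem_powerset] at hC
    simp only [mem_filter, mem_powerset]
    exact ⟨union_subset (hC.trans sdiff_subset) hA', subset_union_right⟩
  · intro B' hB'
    simp only [mem_filter, mem_powerset] at hB'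
    exact sdiff_union_of_subset hB'.2
  · intro C hC
    simp only [mem_powerset] at hC
    have hd : Disjoint C A' := sdiff_disjoint.mono_left hC
    rw [union_sdiff_right, sdiff_eq_self_of_disjoint hd]
  · intro B' hB'
    simp only [mem_filter, mem_powerset] at hB'
    rw [sdiff_union_of_subset hB'.2]

lemma alt_sum_filter {V : Type*} [DecidableEq V] (S A' : Finset V) (hA' : A' ⊆ S) :
    ∑ B' ∈ S.powerset.filter (fun B' => A' ⊆ B'), (-1 : ℝ) ^ ((B' \ A').card)
      = if A' = S then 1 else 0 := by
  rw [reindex S A' hA' (fun B' => (-1 : ℝ) ^ ((B' \ A').card))]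
  have h : ∀ C ∈ (S \ A').powerset, (-1 : ℝ) ^ (((C ∪ A') \ A').card) = (-1 : ℝ) ^ C.card := by
    intro C hC
    have hd : Disjoint C A' := sdiff_disjoint.mono_left (mem_powerset.1 hC)
    rw [union_sdiff_right, sdiff_eq_self_of_disjoint hd]
  rw [Finset.sum_congr rfl h, alt_sum']
  congr 1
  rw [sdiff_eq_empty_iff_subset]
  exact propext ⟨fun h' => h'.antisymm' hA', fun h' => h' ▸ le_rfl⟩

/-- Möbius transform of a CPT-type bi-capacity v(A,B) = ν₁(A) - ν₂(B). -/
theorem stmt_12 (V : Type*) [Fintype V] [DecidableEq V]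
    (ν₁ ν₂ : Finset V → ℝ)
    (h₁0 : ν₁ ∅ = 0) (h₂0 : ν₂ ∅ = 0)
    (h₁mono : ∀ A B : Finset V, A ⊆ B → ν₁ A ≤ ν₁ B)
    (h₂mono : ∀ A B : Finset V, A ⊆ B → ν₂ A ≤ ν₂ B)
    (h₁N : ν₁ univ = 1) (h₂N : ν₂ univ = 1)
    (v : Finset V × Finset V → ℝ) (hv : ∀ p, v p = ν₁ p.1 - ν₂ p.2) :
    (∀ A : Finset V, A.Nonempty → biMobius v A Aᶜ = setMobius ν₁ A) ∧
    (∀ B : Finset V, B ≠ univ →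
      biMobius v ∅ B = setMobius (fun A => ν₂ univ - ν₂ Aᶜ) Bᶜ) ∧
    (biMobius v ∅ univ = -ν₂ univ) ∧
    (∀ A B : Finset V, Disjoint A B → A ≠ ∅ → B ≠ Aᶜ → biMobius v A B = 0) := by
  -- master computation
  have key : ∀ A A' : Finset V, A' ⊆ Aᶜ →
      biMobius v A A' = (if A' = Aᶜ then 1 else 0) * setMobius ν₁ A
        - (if A = ∅ then 1 else 0) *
          ∑ B' ∈ (Aᶜ).powerset.filter (fun B' => A' ⊆ B'),
            (-1 : ℝ) ^ ((B' \ A').card) * ν₂ B' := by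
    intro A A' hA'
    unfold biMobius
    have step : ∀ B ∈ A.powerset, ∀ B' ∈ (Aᶜ).powerset.filter (fun B' => A' ⊆ B'),
        (-1 : ℝ) ^ ((A \ B).card + (B' \ A').card) * v (B, B')
          = ((-1 : ℝ) ^ ((A \ B).card) * ν₁ B) * ((-1 : ℝ) ^ ((B' \ A').card))
            - ((-1 : ℝ) ^ ((A \ B).card)) * ((-1 : ℝ) ^ ((B' \ A').card) * ν₂ B') := by
      intro B _ B' _
      rw [hv]
      simp only [pow_add]
      ring
    calc ∑ B ∈ A.powerset, ∑ B' ∈ (Aᶜ).powerset.filter (fun B' => A' ⊆ B'),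
          (-1 : ℝ) ^ ((A \ B).card + (B' \ A').card) * v (B, B')
        = ∑ B ∈ A.powerset, (∑ B' ∈ (Aᶜ).powerset.filter (fun B' => A' ⊆ B'),
            ((-1 : ℝ) ^ ((A \ B).card) * ν₁ B) * ((-1 : ℝ) ^ ((B' \ A').card))
          - ∑ B' ∈ (Aᶜ).powerset.filter (fun B' => A' ⊆ B'),
            ((-1 : ℝ) ^ ((A \ B).card)) * ((-1 : ℝ) ^ ((B' \ A').card) * ν₂ B')) := by
          refine Finset.sum_congr rfl fun B hB => ?_
          rw [← Finset.sum_sub_distrib]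
          exact Finset.sum_congr rfl fun B' hB' => step B hB B' hB'
      _ = (∑ B ∈ A.powerset, (-1 : ℝ) ^ ((A \ B).card) * ν₁ B)
            * (∑ B' ∈ (Aᶜ).powerset.filter (fun B' => A' ⊆ B'), (-1 : ℝ) ^ ((B' \ A').card))
          - (∑ B ∈ A.powerset, (-1 : ℝ) ^ ((A \ B).card))
            * (∑ B' ∈ (Aᶜ).powerset.filter (fun B' => A' ⊆ B'),
                (-1 : ℝ) ^ ((B' \ A').card) * ν₂ B') := by
          rw [Finset.sum_sub_distrib, Finset.sum_mul_sum, Finset.sum_mul_sum]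
      _ = _ := by rw [alt_sum_filter _ _ hA', alt_sum, setMobius]; ring
  -- the ∅ case computation
  have empty_case : ∀ B : Finset V,
      biMobius v ∅ B = - ∑ C ∈ (Bᶜ).powerset, (-1 : ℝ) ^ C.card * ν₂ (C ∪ B) := by
    intro B
    have hB : B ⊆ (∅ : Finset V)ᶜ := by rw [compl_empty]; exact subset_univ B
    rw [key ∅ B hB]
    have hs : setMobius ν₁ (∅ : Finset V) = 0 := by
      simp [setMobius, h₁0]
    rw [hs, reindex _ B hB (fun B' => (-1 : ℝ) ^ ((B' \ B).card) * ν₂ B')]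
    have hdom : (∅ : Finset V)ᶜ \ B = Bᶜ := by rw [compl_empty, ← compl_eq_univ_sdiff]
    rw [hdom]
    norm_num
    refine Finset.sum_congr rfl fun C hC => ?_
    have hd : Disjoint C B := le_compl_iff_disjoint_right.1 (mem_powerset.1 hC)
    rw [union_sdiff_right, sdiff_eq_self_of_disjoint hd]
  refine ⟨?_, ?_, ?_, ?_⟩
  · intro A hA
    rw [key A Aᶜ le_rfl]
    have h1 : A ≠ ∅ := nonempty_iff_ne_empty.1 hA
    simp [h1]
  · intro B hB
    rw [empty_case B]
    have hBc : (Bᶜ : Finset V) ≠ ∅ := by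
      simp only [ne_eq, compl_eq_empty_iff]
      exact hB
    unfold setMobius
    have split : ∀ D ∈ (Bᶜ).powerset,
        (-1 : ℝ) ^ ((Bᶜ \ D).card) * (ν₂ univ - ν₂ Dᶜ)
          = (-1 : ℝ) ^ ((Bᶜ \ D).card) * ν₂ univ - (-1 : ℝ) ^ ((Bᶜ \ D).card) * ν₂ Dᶜ := by
      intro D _; ring
    rw [Finset.sum_congr rfl split, Finset.sum_sub_distrib, ← Finset.sum_mul, alt_sum,
      if_neg hBc, zero_mul, zero_sub]
    congr 1
    rw [← sum_powerset_compl' (Bᶜ) (fun D => (-1 : ℝ) ^ ((Bᶜ \ D).card) * ν₂ Dᶜ)]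
    refine Finset.sum_congr rfl fun C hC => ?_
    have hC' := mem_powerset.1 hC
    have hcompl : (Bᶜ \ C)ᶜ = C ∪ B := by
      ext x; simp only [mem_compl, mem_sdiff, mem_union, not_and, not_not]; tauto
    rw [Finset.sdiff_sdiff_eq_self hC', hcompl]
  · rw [empty_case univ]
    simp [h₂0]
  · intro A B hAB hA hB
    have hB' : B ⊆ Aᶜ := le_compl_iff_disjoint_left.2 hAB
    rw [key A B hB']
    simp [hA, hB]
end

section
/- For a function v : Q(N) → ℝ with Möbius transform m, and for any i ∈ N and (S,T) ∈ Q(N\{i}), the left derivative satisfies v(S∪{i},T) - v(S,T) = ∑_{(S',T') ∈ [({i}, N\{i}), (S∪{i}, T)]} m(S',T'), where the interval is taken in the lattice order ⊑ on Q(N). -/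
open Finset

section Aux
variable {V : Type*} [Fintype V] [DecidableEq V]

lemma real_sum_powerset {V : Type*} [DecidableEq V] (x : Finset V) :
    ∑ m ∈ x.powerset, (-1 : ℝ) ^ m.card = if x = ∅ then 1 else 0 := by
  have h := Finset.sum_powerset_neg_one_pow_card (x := x)
  have h2 : ((∑ m ∈ x.powerset, (-1 : ℤ) ^ m.card : ℤ) : ℝ)
      = ∑ m ∈ x.powerset, (-1 : ℝ) ^ m.card := by push_cast; rfl
  rw [← h2, h]; split <;> norm_num

lemma alt_lower (B C : Finset V) :
    (∑ A : Finset V, if B ⊆ A ∧ A ⊆ C then ((-1:ℝ))^((A \ B).card) else 0)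
      = if B = C then 1 else 0 := by
  by_cases hBC : B ⊆ C
  · rw [← Finset.sum_filter]
    have himg : univ.filter (fun A => B ⊆ A ∧ A ⊆ C)
        = (C \ B).powerset.image (fun D => B ∪ D) := by
      ext A
      simp only [mem_filter, mem_univ, true_and, mem_image, mem_powerset]
      constructor
      · rintro ⟨h1, h2⟩
        exact ⟨A \ B, by intro x hx; simp only [mem_sdiff] at hx ⊢; exact ⟨h2 hx.1, hx.2⟩,
          by rw [union_sdiff_self_eq_union, union_eq_right.2 h1]⟩
      · rintro ⟨D, hD, rfl⟩
        exact ⟨subset_union_left, union_subset hBC (hD.trans sdiff_subset)⟩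
    have hdisj : ∀ D : Finset V, D ⊆ C \ B → Disjoint B D := fun D hD =>
      (disjoint_of_subset_left hD sdiff_disjoint).symm
    rw [himg, Finset.sum_image ?_]
    · rw [Finset.sum_congr rfl (fun D hD => by
        rw [union_sdiff_cancel_left (hdisj D (mem_powerset.1 hD))])]
      rw [real_sum_powerset]
      by_cases h : B = C
      · subst h; simp
      · rw [if_neg h, if_neg (fun he => h (subset_antisymm hBC (sdiff_eq_empty_iff_subset.1 he)))]
    · intro D1 h1 D2 h2 h
      calc D1 = (B ∪ D1) \ B := by rw [union_sdiff_cancel_left (hdisj D1 (mem_powerset.1 h1))]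
        _ = (B ∪ D2) \ B := by rw [show B ∪ D1 = B ∪ D2 from h]
        _ = D2 := by rw [union_sdiff_cancel_left (hdisj D2 (mem_powerset.1 h2))]
  · rw [Finset.sum_eq_zero, if_neg (fun h => hBC (subset_of_eq h))]
    intro A _
    rw [if_neg]
    rintro ⟨h1, h2⟩
    exact hBC (h1.trans h2)

lemma alt_upper (T B' : Finset V) :
    (∑ A : Finset V, if T ⊆ A ∧ A ⊆ B' then ((-1:ℝ))^((B' \ A).card) else 0)
      = if T = B' then 1 else 0 := by
  by_cases hTB : T ⊆ B'
  · rw [← Finset.sum_filter]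
    have himg : univ.filter (fun A => T ⊆ A ∧ A ⊆ B')
        = (B' \ T).powerset.image (fun D => B' \ D) := by
      ext A
      simp only [mem_filter, mem_univ, true_and, mem_image, mem_powerset]
      constructor
      · rintro ⟨h1, h2⟩
        refine ⟨B' \ A, ?_, Finset.sdiff_sdiff_eq_self h2⟩
        intro x hx
        simp only [mem_sdiff] at hx ⊢
        exact ⟨hx.1, fun hT => hx.2 (h1 hT)⟩
      · rintro ⟨D, hD, rfl⟩
        exact ⟨fun x hx => by
          simp only [mem_sdiff]
          exact ⟨hTB hx, fun hxD => (mem_sdiff.1 (hD hxD)).2 hx⟩, sdiff_subset⟩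
    rw [himg, Finset.sum_image ?_]
    · rw [Finset.sum_congr rfl (fun D hD => by
        rw [Finset.sdiff_sdiff_eq_self ((mem_powerset.1 hD).trans sdiff_subset)])]
      rw [real_sum_powerset]
      by_cases h : T = B'
      · subst h; simp
      · rw [if_neg h, if_neg (fun he => h (subset_antisymm hTB (sdiff_eq_empty_iff_subset.1 he)))]
    · intro D1 h1 D2 h2 h
      rw [Finset.mem_coe, mem_powerset] at h1 h2
      calc D1 = B' \ (B' \ D1) := (Finset.sdiff_sdiff_eq_self (h1.trans sdiff_subset)).symm
        _ = B' \ (B' \ D2) := by rw [show B' \ D1 = B' \ D2 from h]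
        _ = D2 := Finset.sdiff_sdiff_eq_self (h2.trans sdiff_subset)
  · rw [Finset.sum_eq_zero, if_neg (fun h => hTB (subset_of_eq h))]
    intro A _
    rw [if_neg]
    rintro ⟨h1, h2⟩
    exact hTB (h1.trans h2)
end Aux

section Aux2
variable {V : Type*} [Fintype V] [DecidableEq V]

lemma biMobius_eq (v : Finset V × Finset V → ℝ) (A A' : Finset V) :
    biMobius v A A' = ∑ q : Finset V × Finset V,
      if q.1 ⊆ A ∧ (A' ⊆ q.2 ∧ q.2 ⊆ Aᶜ) then
        (-1 : ℝ) ^ ((A \ q.1).card + (q.2 \ A').card) * v q else 0 := by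
  rw [Fintype.sum_prod_type, biMobius]
  rw [show A.powerset = univ.filter (· ⊆ A) from by ext x; simp]
  rw [Finset.sum_filter]
  refine Finset.sum_congr rfl fun B _ => ?_
  split_ifs with h
  · rw [show (Aᶜ).powerset.filter (fun B' => A' ⊆ B')
        = univ.filter (fun B' => A' ⊆ B' ∧ B' ⊆ Aᶜ) from by ext x; simp [and_comm],
      Finset.sum_filter]
    refine Finset.sum_congr rfl fun B' _ => ?_
    simp [h]
  · rw [eq_comm]
    refine Finset.sum_eq_zero fun B' _ => ?_
    rw [if_neg (fun hcon => h hcon.1)]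

lemma mobius_inv (v : Finset V × Finset V → ℝ) (S T : Finset V) (hST : Disjoint S T) :
    (∑ p ∈ univ.filter (fun p : Finset V × Finset V =>
        Disjoint p.1 p.2 ∧ p.1 ⊆ S ∧ T ⊆ p.2), biMobius v p.1 p.2) = v (S, T) := by
  rw [Finset.sum_filter]
  have key : ∀ p : Finset V × Finset V,
      (if Disjoint p.1 p.2 ∧ p.1 ⊆ S ∧ T ⊆ p.2 then biMobius v p.1 p.2 else 0)
      = ∑ q : Finset V × Finset V,
          (if q.1 ⊆ p.1 ∧ p.1 ⊆ S ∩ q.2ᶜ then ((-1:ℝ))^((p.1 \ q.1).card) else 0)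
          * ((if T ⊆ p.2 ∧ p.2 ⊆ q.2 then ((-1:ℝ))^((q.2 \ p.2).card) else 0) * v q) := by
    intro p
    by_cases hc : Disjoint p.1 p.2 ∧ p.1 ⊆ S ∧ T ⊆ p.2
    · rw [if_pos hc, biMobius_eq]
      refine Finset.sum_congr rfl fun q _ => ?_
      have hiff : (q.1 ⊆ p.1 ∧ (p.2 ⊆ q.2 ∧ q.2 ⊆ p.1ᶜ)) ↔
          ((q.1 ⊆ p.1 ∧ p.1 ⊆ S ∩ q.2ᶜ) ∧ (T ⊆ p.2 ∧ p.2 ⊆ q.2)) := by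
        constructor
        · rintro ⟨h1, h2, h3⟩
          refine ⟨⟨h1, subset_inter hc.2.1 fun x hx => ?_⟩, hc.2.2, h2⟩
          rw [mem_compl]
          intro hxq
          exact (mem_compl.1 (h3 hxq)) hx
        · rintro ⟨⟨h1, h4⟩, h5, h2⟩
          refine ⟨h1, h2, fun x hx => ?_⟩
          rw [mem_compl]
          intro hxp
          exact (mem_compl.1 ((h4.trans inter_subset_right) hxp)) hx
      by_cases h1 : (q.1 ⊆ p.1 ∧ p.1 ⊆ S ∩ q.2ᶜ) <;>
        by_cases h2 : (T ⊆ p.2 ∧ p.2 ⊆ q.2)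
      · rw [if_pos h1, if_pos h2, if_pos (hiff.2 ⟨h1, h2⟩), pow_add]; ring
      · rw [if_neg h2, if_neg (fun hA => h2 (hiff.1 hA).2)]; ring
      · rw [if_neg h1, if_neg (fun hA => h1 (hiff.1 hA).1)]; ring
      · rw [if_neg h1, if_neg (fun hA => h1 (hiff.1 hA).1)]; ring
    · rw [if_neg hc, eq_comm]
      refine Finset.sum_eq_zero fun q _ => ?_
      by_cases h1 : (q.1 ⊆ p.1 ∧ p.1 ⊆ S ∩ q.2ᶜ)
      · by_cases h2 : (T ⊆ p.2 ∧ p.2 ⊆ q.2)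
        · exfalso
          refine hc ⟨Finset.disjoint_left.2 fun x hx hx2 =>
            (mem_compl.1 ((h1.2.trans inter_subset_right) hx)) (h2.2 hx2),
            h1.2.trans inter_subset_left, h2.1⟩
        · rw [if_neg h2]; simp
      · rw [if_neg h1]; simp
  rw [Finset.sum_congr rfl fun p _ => key p, Finset.sum_comm]
  have step2 : ∀ q : Finset V × Finset V,
      (∑ p : Finset V × Finset V,
        (if q.1 ⊆ p.1 ∧ p.1 ⊆ S ∩ q.2ᶜ then ((-1:ℝ))^((p.1 \ q.1).card) else 0)
          * ((if T ⊆ p.2 ∧ p.2 ⊆ q.2 then ((-1:ℝ))^((q.2 \ p.2).card) else 0) * v q))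
      = (if q.1 = S ∩ q.2ᶜ then (1:ℝ) else 0) * ((if T = q.2 then (1:ℝ) else 0) * v q) := by
    intro q
    rw [Fintype.sum_prod_type]
    simp_rw [← Finset.mul_sum, ← Finset.sum_mul]
    rw [alt_lower, alt_upper]
  rw [Finset.sum_congr rfl fun q _ => step2 q]
  rw [Fintype.sum_prod_type]
  simp only [ite_mul, one_mul, zero_mul, Finset.sum_ite_eq, mem_univ, if_true]
  have hS : S ∩ Tᶜ = S := inter_eq_left.2 fun x hx =>
    mem_compl.2 fun hxT => (Finset.disjoint_left.1 hST) hx hxT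
  have swap : ∀ x x1 : Finset V,
      (if x = S ∩ x1ᶜ then (if T = x1 then v (x, x1) else 0) else 0)
      = (if T = x1 then (if x = S ∩ x1ᶜ then v (x, x1) else 0) else 0) := by
    intros; split_ifs <;> rfl
  rw [Finset.sum_congr rfl fun x _ => Finset.sum_congr rfl fun x1 _ => swap x x1]
  simp only [Finset.sum_ite_eq, mem_univ, if_true]
  rw [hS]
  rw [Finset.sum_ite_eq' univ S (fun x => v (x, T))]
  simp
end Aux2

/-- the left derivative of v at (S,T) w.r.t. i equals the sum of
the Möbius transform over the interval [({i}, N\{i}), (S∪{i}, T)] of Q(N). -/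
theorem stmt_14 (V : Type*) [Fintype V] [DecidableEq V]
    (v : Finset V × Finset V → ℝ) (i : V) (S T : Finset V)
    (hST : Disjoint S T) (hiS : i ∉ S) (hiT : i ∉ T) :
    v (insert i S, T) - v (S, T) =
      ∑ p ∈ univ.filter (fun p : Finset V × Finset V =>
          Disjoint p.1 p.2 ∧
          ({i} : Finset V) ⊆ p.1 ∧ p.2 ⊆ ({i} : Finset V)ᶜ ∧
          p.1 ⊆ insert i S ∧ T ⊆ p.2),
        biMobius v p.1 p.2 := by
  have hins : Disjoint (insert i S) T := by
    rw [Finset.disjoint_insert_left]; exact ⟨hiT, hST⟩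
  rw [← mobius_inv v (insert i S) T hins, ← mobius_inv v S T hST]
  rw [← Finset.sum_filter_add_sum_filter_not
    (univ.filter fun p : Finset V × Finset V =>
      Disjoint p.1 p.2 ∧ p.1 ⊆ insert i S ∧ T ⊆ p.2)
    (fun p => i ∈ p.1) (fun p => biMobius v p.1 p.2)]
  rw [Finset.filter_filter, Finset.filter_filter]
  have e1 : univ.filter (fun p : Finset V × Finset V =>
        (Disjoint p.1 p.2 ∧ p.1 ⊆ insert i S ∧ T ⊆ p.2) ∧ i ∈ p.1)
      = univ.filter (fun p : Finset V × Finset V => Disjoint p.1 p.2 ∧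
          ({i} : Finset V) ⊆ p.1 ∧ p.2 ⊆ ({i} : Finset V)ᶜ ∧
          p.1 ⊆ insert i S ∧ T ⊆ p.2) := by
    ext p
    simp only [mem_filter, mem_univ, true_and, singleton_subset_iff]
    constructor
    · rintro ⟨⟨hd, hsub, hT⟩, hi⟩
      refine ⟨hd, hi, ?_, hsub, hT⟩
      intro x hx
      rw [mem_compl, mem_singleton]
      rintro rfl
      exact (Finset.disjoint_left.1 hd) hi hx
    · rintro ⟨hd, hi, _, hsub, hT⟩
      exact ⟨⟨hd, hsub, hT⟩, hi⟩
  have e2 : univ.filter (fun p : Finset V × Finset V =>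
        (Disjoint p.1 p.2 ∧ p.1 ⊆ insert i S ∧ T ⊆ p.2) ∧ ¬ i ∈ p.1)
      = univ.filter (fun p : Finset V × Finset V =>
          Disjoint p.1 p.2 ∧ p.1 ⊆ S ∧ T ⊆ p.2) := by
    ext p
    simp only [mem_filter, mem_univ, true_and]
    constructor
    · rintro ⟨⟨hd, hsub, hT⟩, hi'⟩
      refine ⟨hd, fun x hx => ?_, hT⟩
      rcases mem_insert.1 (hsub hx) with rfl | h
      · exact absurd hx hi'
      · exact h
    · rintro ⟨hd, hsub, hT⟩
      exact ⟨⟨hd, hsub.trans (subset_insert _ _), hT⟩, fun hi' => hiS (hsub hi')⟩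
  rw [e1, e2]
  ring
end

section
/- For a function v : Q(N) → ℝ with Möbius transform m, any i ∈ N and any (S,T) ∈ Q(N) with i ∈ T, the right derivative satisfies v(S, T\{i}) - v(S,T) = ∑_{(S',T') ∈ [(∅, N\{i}), (S, T\{i})]} m(S',T'). -/
open Finset

section Helpers
variable {V : Type*} [Fintype V] [DecidableEq V]

lemma pow_sum (C : Finset V) :
    ∑ U ∈ C.powerset, (-1:ℝ)^U.card = if C = ∅ then 1 else 0 := by
  have h := Finset.sum_powerset_neg_one_pow_card (α := V) (x := C)
  have h2 : ((∑ t ∈ C.powerset, (-1:ℤ)^t.card : ℤ) : ℝ)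
      = ∑ U ∈ C.powerset, (-1:ℝ)^U.card := by push_cast; rfl
  rw [← h2, h]
  split_ifs <;> norm_num

lemma pow_sum' (C : Finset V) :
    ∑ U ∈ C.powerset, (-1:ℝ)^(C \ U).card = if C = ∅ then 1 else 0 := by
  rw [← pow_sum C]
  refine Finset.sum_nbij' (fun U => C \ U) (fun U => C \ U) ?_ ?_ ?_ ?_ ?_
  · intro U hU; simp [Finset.mem_powerset]
  · intro U hU; simp [Finset.mem_powerset]
  · intro U hU; simp only [Finset.mem_powerset] at hU
    simp [sdiff_sdiff_right_self, Finset.inf_eq_inter,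
      Finset.inter_eq_right.mpr hU]
  · intro U hU; simp only [Finset.mem_powerset] at hU
    simp [sdiff_sdiff_right_self, Finset.inf_eq_inter,
      Finset.inter_eq_right.mpr hU]
  · intro U hU; rfl

lemma icc1 (A B : Finset V) :
    ∑ T ∈ univ.filter (fun T => A ⊆ T ∧ T ⊆ B), (-1:ℝ)^(B \ T).card
      = if A = B then 1 else 0 := by
  by_cases hAB : A ⊆ B
  · have key : ∑ T ∈ univ.filter (fun T => A ⊆ T ∧ T ⊆ B), (-1:ℝ)^(B \ T).card
        = ∑ U ∈ (B \ A).powerset, (-1:ℝ)^((B \ A) \ U).card := by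
      refine Finset.sum_nbij' (fun T => T \ A) (fun U => A ∪ U) ?_ ?_ ?_ ?_ ?_
      · intro T hT; simp only [Finset.mem_filter, Finset.mem_univ, true_and] at hT
        simp only [Finset.mem_powerset]; exact Finset.sdiff_subset_sdiff hT.2 le_rfl
      · intro U hU; simp only [Finset.mem_powerset] at hU
        simp only [Finset.mem_filter, Finset.mem_univ, true_and]
        exact ⟨Finset.subset_union_left, Finset.union_subset hAB (hU.trans Finset.sdiff_subset)⟩
      · intro T hT; simp only [Finset.mem_filter, Finset.mem_univ, true_and] at hT
        exact Finset.union_sdiff_of_subset hT.1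
      · intro U hU; simp only [Finset.mem_powerset] at hU
        have h : Disjoint A U := Finset.disjoint_of_subset_right hU disjoint_sdiff
        exact Finset.union_sdiff_cancel_left h
      · intro T hT; simp only [Finset.mem_filter, Finset.mem_univ, true_and] at hT
        congr 2
        simp only [sdiff_sdiff, Finset.sup_eq_union]
        rw [Finset.union_sdiff_of_subset hT.1]
    rw [key, pow_sum']
    have : B \ A = ∅ ↔ A = B := by
      rw [Finset.sdiff_eq_empty_iff_subset]
      exact ⟨fun h => le_antisymm hAB h, fun h => h ▸ le_rfl⟩
    simp [this]
  · rw [Finset.filter_false_of_mem, Finset.sum_empty]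
    · have : A ≠ B := fun h => hAB (h ▸ le_rfl)
      simp [this]
    · intro T _ hT; exact hAB (hT.1.trans hT.2)

lemma icc2 (A B : Finset V) :
    ∑ T ∈ univ.filter (fun T => A ⊆ T ∧ T ⊆ B), (-1:ℝ)^(T \ A).card
      = if A = B then 1 else 0 := by
  by_cases hAB : A ⊆ B
  · have key : ∑ T ∈ univ.filter (fun T => A ⊆ T ∧ T ⊆ B), (-1:ℝ)^(T \ A).card
        = ∑ U ∈ (B \ A).powerset, (-1:ℝ)^U.card := by
      refine Finset.sum_nbij' (fun T => T \ A) (fun U => A ∪ U) ?_ ?_ ?_ ?_ ?_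
      · intro T hT; simp only [Finset.mem_filter, Finset.mem_univ, true_and] at hT
        simp only [Finset.mem_powerset]; exact Finset.sdiff_subset_sdiff hT.2 le_rfl
      · intro U hU; simp only [Finset.mem_powerset] at hU
        simp only [Finset.mem_filter, Finset.mem_univ, true_and]
        exact ⟨Finset.subset_union_left, Finset.union_subset hAB (hU.trans Finset.sdiff_subset)⟩
      · intro T hT; simp only [Finset.mem_filter, Finset.mem_univ, true_and] at hT
        exact Finset.union_sdiff_of_subset hT.1
      · intro U hU; simp only [Finset.mem_powerset] at hU
        have h : Disjoint A U := Finset.disjoint_of_subset_right hU disjoint_sdiff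
        exact Finset.union_sdiff_cancel_left h
      · intro T hT; rfl
    rw [key, pow_sum]
    have : B \ A = ∅ ↔ A = B := by
      rw [Finset.sdiff_eq_empty_iff_subset]
      exact ⟨fun h => le_antisymm hAB h, fun h => h ▸ le_rfl⟩
    simp [this]
  · rw [Finset.filter_false_of_mem, Finset.sum_empty]
    · have : A ≠ B := fun h => hAB (h ▸ le_rfl)
      simp [this]
    · intro T _ hT; exact hAB (hT.1.trans hT.2)

lemma prod_sum (P : Finset V → Prop) (Q : Finset V → Finset V → Prop)
    [DecidablePred P] [∀ x, DecidablePred (Q x)] (f : Finset V → Finset V → ℝ) :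
    ∑ p ∈ univ.filter (fun p : Finset V × Finset V => P p.1 ∧ Q p.1 p.2), f p.1 p.2
      = ∑ x ∈ univ.filter P, ∑ y ∈ univ.filter (Q x), f x y := by
  rw [Finset.sum_filter, Fintype.sum_prod_type]
  rw [Finset.sum_filter]
  refine Finset.sum_congr rfl fun x _ => ?_
  rw [Finset.sum_filter]
  by_cases hP : P x
  · simp [hP]
  · simp [hP]

lemma swap_sum (P Q : Finset V → Prop) (R : Finset V → Finset V → Prop)
    [DecidablePred P] [DecidablePred Q] [∀ x, DecidablePred (R x)]
    (f : Finset V → Finset V → ℝ) :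
    ∑ x ∈ univ.filter P, ∑ y ∈ univ.filter (fun y => Q y ∧ R x y), f x y
      = ∑ y ∈ univ.filter Q, ∑ x ∈ univ.filter (fun x => P x ∧ R x y), f x y := by
  simp only [Finset.sum_filter]
  have l1 : (∑ x : Finset V, if P x then ∑ y : Finset V,
        if Q y ∧ R x y then f x y else 0 else 0)
      = ∑ x : Finset V, ∑ y : Finset V, if P x ∧ Q y ∧ R x y then f x y else 0 := by
    refine Finset.sum_congr rfl fun x _ => ?_
    by_cases hP : P x <;> simp [hP]
  have l2 : (∑ y : Finset V, if Q y then ∑ x : Finset V,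
        if P x ∧ R x y then f x y else 0 else 0)
      = ∑ y : Finset V, ∑ x : Finset V, if P x ∧ Q y ∧ R x y then f x y else 0 := by
    refine Finset.sum_congr rfl fun y _ => ?_
    by_cases hQ : Q y <;> simp [hQ]
  rw [l1, l2, Finset.sum_comm]

lemma inv_lem (v : Finset V × Finset V → ℝ) (A A' : Finset V) (h : Disjoint A A') :
    ∑ p ∈ univ.filter (fun p : Finset V × Finset V =>
        p.1 ⊆ A ∧ A' ⊆ p.2 ∧ Disjoint p.1 p.2), biMobius v p.1 p.2 = v (A, A') := by
  rw [prod_sum (fun S' => S' ⊆ A) (fun S' T' => A' ⊆ T' ∧ Disjoint S' T')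
    (fun S' T' => biMobius v S' T')]
  have hrange : ∀ (X T' : Finset V), X.powerset.filter (fun B' => T' ⊆ B')
      = univ.filter (fun B' => B' ⊆ X ∧ T' ⊆ B') := by
    intro X T'; ext B'; simp [Finset.mem_powerset]
  have claim : ∀ S' ∈ univ.filter (fun S' => S' ⊆ A),
      (∑ T' ∈ univ.filter (fun T' => A' ⊆ T' ∧ Disjoint S' T'), biMobius v S' T')
        = ∑ B ∈ S'.powerset, (-1:ℝ)^(S' \ B).card * v (B, A') := by
    intro S' hS'
    simp only [Finset.mem_filter, Finset.mem_univ, true_and] at hS'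
    have hdA' : A' ⊆ S'ᶜ := le_compl_iff_disjoint_left.mpr (h.mono_left hS')
    unfold biMobius
    rw [Finset.sum_comm]
    refine Finset.sum_congr rfl fun B _ => ?_
    simp only [hrange]
    rw [swap_sum (fun T' => A' ⊆ T' ∧ Disjoint S' T') (fun B' => B' ⊆ S'ᶜ)
      (fun T' B' => T' ⊆ B') (fun T' B' => (-1:ℝ)^((S' \ B).card + (B' \ T').card) * v (B, B'))]
    have step : ∀ B' ∈ univ.filter (fun B' => B' ⊆ S'ᶜ),
        (∑ T' ∈ univ.filter (fun T' => (A' ⊆ T' ∧ Disjoint S' T') ∧ T' ⊆ B'),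
          (-1:ℝ)^((S' \ B).card + (B' \ T').card) * v (B, B'))
        = ((-1:ℝ)^(S' \ B).card * v (B, B')) * (if A' = B' then 1 else 0) := by
      intro B' hB'
      simp only [Finset.mem_filter, Finset.mem_univ, true_and] at hB'
      have hfc : univ.filter (fun T' => (A' ⊆ T' ∧ Disjoint S' T') ∧ T' ⊆ B')
          = univ.filter (fun T' => A' ⊆ T' ∧ T' ⊆ B') := by
        ext T'
        simp only [Finset.mem_filter, Finset.mem_univ, true_and]
        constructor
        · rintro ⟨⟨h1, _⟩, h3⟩; exact ⟨h1, h3⟩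
        · rintro ⟨h1, h3⟩
          exact ⟨⟨h1, le_compl_iff_disjoint_left.mp (h3.trans hB')⟩, h3⟩
      rw [hfc, ← icc1 A' B', Finset.mul_sum]
      refine Finset.sum_congr rfl fun T' _ => ?_
      rw [pow_add]; ring
    rw [Finset.sum_congr rfl step]
    simp only [mul_ite, mul_one, mul_zero]
    rw [Finset.sum_ite_eq]
    simp [hdA']
  rw [Finset.sum_congr rfl claim]
  have hpow : ∀ S' : Finset V, S'.powerset
      = univ.filter (fun B => True ∧ B ⊆ S') := by
    intro S'; ext B; simp [Finset.mem_powerset]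
  simp only [hpow]
  rw [swap_sum (fun S' => S' ⊆ A) (fun _ => True) (fun S' B => B ⊆ S')
    (fun S' B => (-1:ℝ)^(S' \ B).card * v (B, A'))]
  have step2 : ∀ B ∈ univ.filter (fun _ : Finset V => True),
      (∑ S' ∈ univ.filter (fun S' => S' ⊆ A ∧ B ⊆ S'),
          (-1:ℝ)^(S' \ B).card * v (B, A'))
        = (if B = A then 1 else 0) * v (B, A') := by
    intro B _
    have hfc2 : univ.filter (fun S' => S' ⊆ A ∧ B ⊆ S')
        = univ.filter (fun S' => B ⊆ S' ∧ S' ⊆ A) := by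
      ext S'; simp only [Finset.mem_filter, Finset.mem_univ, true_and, and_comm]
    rw [hfc2, ← icc2 B A, Finset.sum_mul]
  rw [Finset.sum_congr rfl step2]
  simp only [ite_mul, one_mul, zero_mul]
  rw [Finset.sum_ite_eq']
  simp

end Helpers

/-- the right derivative of v at (S,T) w.r.t. i ∈ T equals the sum
of the Möbius transform over the interval [(∅, N\{i}), (S, T\{i})] of Q(N). -/
theorem stmt_15 (V : Type*) [Fintype V] [DecidableEq V]
    (v : Finset V × Finset V → ℝ) (i : V) (S T : Finset V)
    (hST : Disjoint S T) (hiT : i ∈ T) :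
    v (S, T \ {i}) - v (S, T) =
      ∑ p ∈ univ.filter (fun p : Finset V × Finset V =>
          Disjoint p.1 p.2 ∧
          (∅ : Finset V) ⊆ p.1 ∧ p.2 ⊆ ({i} : Finset V)ᶜ ∧
          p.1 ⊆ S ∧ T \ {i} ⊆ p.2),
        biMobius v p.1 p.2 := by
  have h1 := inv_lem v S (T \ {i}) (hST.mono_right Finset.sdiff_subset)
  have h2 := inv_lem v S T hST
  have hsplit := Finset.sum_filter_add_sum_filter_not
    (univ.filter (fun p : Finset V × Finset V =>
      p.1 ⊆ S ∧ T \ {i} ⊆ p.2 ∧ Disjoint p.1 p.2))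
    (fun p => i ∈ p.2) (fun p => biMobius v p.1 p.2)
  rw [Finset.filter_filter, Finset.filter_filter] at hsplit
  have hcompl : ∀ s : Finset V, s ⊆ ({i} : Finset V)ᶜ ↔ i ∉ s := by
    intro s
    rw [← Finset.le_iff_subset, le_compl_iff_disjoint_left, Finset.disjoint_singleton_left]
  have eq1 : univ.filter (fun p : Finset V × Finset V =>
        (p.1 ⊆ S ∧ T \ {i} ⊆ p.2 ∧ Disjoint p.1 p.2) ∧ i ∈ p.2)
      = univ.filter (fun p : Finset V × Finset V =>
        p.1 ⊆ S ∧ T ⊆ p.2 ∧ Disjoint p.1 p.2) := by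
    ext p
    simp only [Finset.mem_filter, Finset.mem_univ, true_and]
    constructor
    · rintro ⟨⟨hp1, hp2, hp3⟩, hp4⟩
      refine ⟨hp1, fun x hx => ?_, hp3⟩
      by_cases hxi : x = i
      · exact hxi ▸ hp4
      · exact hp2 (Finset.mem_sdiff.mpr ⟨hx, by simp [hxi]⟩)
    · rintro ⟨hp1, hp2, hp3⟩
      exact ⟨⟨hp1, (Finset.sdiff_subset).trans hp2, hp3⟩, hp2 hiT⟩
  have eq2 : univ.filter (fun p : Finset V × Finset V =>
        (p.1 ⊆ S ∧ T \ {i} ⊆ p.2 ∧ Disjoint p.1 p.2) ∧ ¬ i ∈ p.2)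
      = univ.filter (fun p : Finset V × Finset V =>
        Disjoint p.1 p.2 ∧
        (∅ : Finset V) ⊆ p.1 ∧ p.2 ⊆ ({i} : Finset V)ᶜ ∧
        p.1 ⊆ S ∧ T \ {i} ⊆ p.2) := by
    ext p
    simp only [Finset.mem_filter, Finset.mem_univ, true_and, hcompl,
      Finset.empty_subset]
    tauto
  rw [eq1, eq2, h2] at hsplit
  rw [h1] at hsplit
  linarith
end

section
/- For a function v : Q(N) → ℝ with Möbius transform m, any (S,T) ∈ Q(N) with (S,T) ≠ (∅,∅), and any (K,L) ∈ Q(N\S) with L ⊇ T, the (S,T)-derivative Δ_{S,T}v(K,L) = ∑_{S'⊆S, T'⊆T} (-1)^{(|S|-|S'|)+(|T|-|T'|)} v(K∪S', L\T') equals ∑_{(S',T') ∈ [(S, N\(S∪T)), (S∪K, L\T)]} m(S',T'), the interval being taken in the lattice order ⊑. -/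
open Finset

section Aux
variable {V : Type*} [Fintype V] [DecidableEq V]

lemma powerset_alt (x : Finset V) :
    ∑ m ∈ x.powerset, (-1 : ℝ) ^ m.card = if x = ∅ then 1 else 0 := by
  have h := Finset.sum_powerset_neg_one_pow_card (x := x)
  have : ((∑ m ∈ x.powerset, (-1 : ℤ) ^ m.card : ℤ) : ℝ)
      = ∑ m ∈ x.powerset, (-1 : ℝ) ^ m.card := by push_cast; rfl
  rw [← this, h]
  split_ifs <;> norm_num

lemma altA (a b B : Finset V) (hBa : B ⊆ a) :
    ∑ P ∈ Finset.Icc a b, (-1 : ℝ) ^ (P \ B).card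
      = if a = b then (-1 : ℝ) ^ ((a \ B).card) else 0 := by
  by_cases hab : a ⊆ b
  · have : ∑ P ∈ Finset.Icc a b, (-1 : ℝ) ^ (P \ B).card
        = ∑ R ∈ (b \ a).powerset, (-1 : ℝ) ^ ((a \ B).card + R.card) := by
      refine Finset.sum_nbij' (fun P => P \ a) (fun R => R ∪ a) ?_ ?_ ?_ ?_ ?_
      · intro P hP
        rw [Finset.mem_Icc] at hP
        exact Finset.mem_powerset.2 (sdiff_le_sdiff hP.2 le_rfl)
      · intro R hR
        rw [Finset.mem_powerset] at hR
        rw [Finset.mem_Icc]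
        constructor
        · exact Finset.subset_union_right
        · exact Finset.union_subset (hR.trans (Finset.sdiff_subset)) hab
      · intro P hP
        rw [Finset.mem_Icc] at hP
        exact Finset.sdiff_union_of_subset hP.1
      · intro R hR
        rw [Finset.mem_powerset] at hR
        have h' := Finset.disjoint_left.1 (Finset.disjoint_of_subset_left hR (Finset.sdiff_disjoint))
        ext x
        simp only [Finset.mem_sdiff, Finset.mem_union]
        exact ⟨fun h => h.1.resolve_right h.2, fun h => ⟨Or.inl h, h' h⟩⟩
      · intro P hP
        rw [Finset.mem_Icc] at hP
        congr 1
        have h1 : P \ B = (P \ a) ∪ (a \ B) := (Finset.sdiff_union_sdiff_cancel hP.1 hBa).symm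
        rw [h1, Finset.card_union_of_disjoint, add_comm]
        exact Finset.disjoint_of_subset_right Finset.sdiff_subset Finset.sdiff_disjoint
    rw [this]
    simp only [pow_add, ← Finset.mul_sum]
    rw [powerset_alt]
    rcases eq_or_ne a b with h | h
    · simp [h]
    · have : b \ a ≠ ∅ := by
        intro hempty
        exact h (Finset.Subset.antisymm hab (by rwa [Finset.sdiff_eq_empty_iff_subset] at hempty))
      simp [this, h]
  · have h1 : Finset.Icc a b = ∅ := Finset.Icc_eq_empty (by simpa using hab)
    have h2 : a ≠ b := by rintro rfl; exact hab le_rfl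
    simp [h1, h2]

lemma altB (a b B' : Finset V) (hbB : b ⊆ B') :
    ∑ Q ∈ Finset.Icc a b, (-1 : ℝ) ^ (B' \ Q).card
      = if a = b then (-1 : ℝ) ^ ((B' \ b).card) else 0 := by
  by_cases hab : a ⊆ b
  · have : ∑ Q ∈ Finset.Icc a b, (-1 : ℝ) ^ (B' \ Q).card
        = ∑ R ∈ (b \ a).powerset, (-1 : ℝ) ^ ((B' \ b).card + R.card) := by
      refine Finset.sum_nbij' (fun Q => b \ Q) (fun R => b \ R) ?_ ?_ ?_ ?_ ?_
      · intro Q hQ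
        rw [Finset.mem_Icc] at hQ
        exact Finset.mem_powerset.2 (sdiff_le_sdiff le_rfl hQ.1)
      · intro R hR
        rw [Finset.mem_powerset] at hR
        rw [Finset.mem_Icc]
        exact ⟨Finset.subset_sdiff.2 ⟨hab, Finset.disjoint_of_subset_right hR Finset.sdiff_disjoint.symm⟩, Finset.sdiff_subset⟩
      · intro Q hQ
        rw [Finset.mem_Icc] at hQ
        exact Finset.sdiff_sdiff_eq_self hQ.2
      · intro R hR
        rw [Finset.mem_powerset] at hR
        exact Finset.sdiff_sdiff_eq_self (hR.trans Finset.sdiff_subset)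
      · intro Q hQ
        rw [Finset.mem_Icc] at hQ
        congr 1
        have h1 : B' \ Q = (B' \ b) ∪ (b \ Q) := (Finset.sdiff_union_sdiff_cancel hbB hQ.2).symm
        rw [h1, Finset.card_union_of_disjoint]
        exact Finset.disjoint_of_subset_right Finset.sdiff_subset Finset.sdiff_disjoint
    rw [this]
    simp only [pow_add, ← Finset.mul_sum]
    rw [powerset_alt]
    rcases eq_or_ne a b with h | h
    · simp [h]
    · have : b \ a ≠ ∅ := by
        intro hempty
        exact h (Finset.Subset.antisymm hab (by rwa [Finset.sdiff_eq_empty_iff_subset] at hempty))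
      simp [this, h]
  · have h1 : Finset.Icc a b = ∅ := Finset.Icc_eq_empty (by simpa using hab)
    have h2 : a ≠ b := by rintro rfl; exact hab le_rfl
    simp [h1, h2]

lemma sum_Icc_ite (a b : Finset V) (f : Finset V → ℝ) :
    ∑ P : Finset V, (if a ⊆ P ∧ P ⊆ b then f P else 0) = ∑ P ∈ Finset.Icc a b, f P := by
  rw [← Finset.sum_filter]
  congr 1
  ext P
  simp [Finset.mem_Icc]

lemma condPQ (S T K L B B' P Q : Finset V) :
    ((Disjoint P Q ∧ S ⊆ P ∧ Q ⊆ (S ∪ T)ᶜ ∧ P ⊆ S ∪ K ∧ L \ T ⊆ Q) ∧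
      B ⊆ P ∧ B' ⊆ Pᶜ ∧ Q ⊆ B')
    ↔ ((S ∪ B ⊆ P ∧ P ⊆ (S ∪ K) \ B') ∧ (L \ T ⊆ Q ∧ Q ⊆ B' \ (S ∪ T))) := by
  constructor
  · rintro ⟨⟨hPQ, hSP, hQc, hPSK, hLTQ⟩, hBP, hB'P, hQB'⟩
    refine ⟨⟨Finset.union_subset hSP hBP,
      Finset.subset_sdiff.2 ⟨hPSK, le_compl_iff_disjoint_left.1 hB'P⟩⟩,
      hLTQ, Finset.subset_sdiff.2 ⟨hQB', le_compl_iff_disjoint_right.1 hQc⟩⟩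
  · rintro ⟨⟨h1, h2⟩, h3, h4⟩
    obtain ⟨hPSK, hPB'⟩ := Finset.subset_sdiff.1 h2
    obtain ⟨hQB', hQST⟩ := Finset.subset_sdiff.1 h4
    exact ⟨⟨hPB'.mono_right hQB', (Finset.union_subset_iff.1 h1).1,
      le_compl_iff_disjoint_right.2 hQST, hPSK, h3⟩,
      (Finset.union_subset_iff.1 h1).2, le_compl_iff_disjoint_left.2 hPB', hQB'⟩

lemma condBB' {S T K L : Finset V}
    (hKL : Disjoint K L) (hKS : Disjoint K S) (hLS : Disjoint L S)
    (hTL : T ⊆ L) (B B' : Finset V) :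
    (S ∪ B = (S ∪ K) \ B' ∧ L \ T = B' \ (S ∪ T)) ↔
      ((K ⊆ B ∧ B ⊆ S ∪ K) ∧ (L \ T ⊆ B' ∧ B' ⊆ L)) := by
  have dKL := Finset.disjoint_left.1 hKL
  have dKS := Finset.disjoint_left.1 hKS
  have dLS := Finset.disjoint_left.1 hLS
  constructor
  · rintro ⟨h1, h2⟩
    have h1' := fun x => Finset.ext_iff.1 h1 x
    have h2' := fun x => Finset.ext_iff.1 h2 x
    simp only [Finset.mem_union, Finset.mem_sdiff] at h1' h2'
    refine ⟨⟨fun x hx => ?_, fun x hx => ?_⟩, fun x hx => ?_, fun x hx => ?_⟩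
    · have a := h1' x; have b := h2' x
      have hnS := dKS hx; have hnL := dKL hx
      have hTLx : x ∈ T → x ∈ L := fun h => hTL h
      tauto
    · have a := h1' x
      rw [Finset.mem_union]
      tauto
    · rw [Finset.mem_sdiff] at hx
      have b := h2' x
      tauto
    · have a := h1' x; have b := h2' x
      have hTLx : x ∈ T → x ∈ L := fun h => hTL h
      have hLSx : x ∈ L → x ∉ S := fun h => dLS h
      tauto
  · rintro ⟨⟨hKB, hBSK⟩, hLTB', hB'L⟩
    constructor <;> ext x <;> simp only [Finset.mem_union, Finset.mem_sdiff]
    · have hKBx : x ∈ K → x ∈ B := fun h => hKB h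
      have hBSKx : x ∈ B → x ∈ S ∨ x ∈ K := fun h => Finset.mem_union.1 (hBSK h)
      have hB'Lx : x ∈ B' → x ∈ L := fun h => hB'L h
      have : x ∈ L → x ∉ S := fun h => dLS h
      have : x ∈ K → x ∉ L := fun h => dKL h
      tauto
    · have hLTB'x : x ∈ L → x ∉ T → x ∈ B' := fun h1 h2 => hLTB' (Finset.mem_sdiff.2 ⟨h1, h2⟩)
      have hB'Lx : x ∈ B' → x ∈ L := fun h => hB'L h
      have : x ∈ L → x ∉ S := fun h => dLS h
      tauto

end Aux

/-- the (S,T)-derivative Δ_{S,T}v(K,L) equals the sum of the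
Möbius transform over the interval [(S, N\(S∪T)), (S∪K, L\T)] of Q(N). -/
theorem stmt_16 (V : Type*) [Fintype V] [DecidableEq V]
    (v : Finset V × Finset V → ℝ) (S T K L : Finset V)
    (hST : Disjoint S T) (hSTne : (S, T) ≠ ((∅ : Finset V), (∅ : Finset V)))
    (hKL : Disjoint K L) (hKS : Disjoint K S) (hLS : Disjoint L S)
    (hTL : T ⊆ L) :
    ∑ S' ∈ S.powerset, ∑ T' ∈ T.powerset,
        (-1 : ℝ) ^ ((S.card - S'.card) + (T.card - T'.card)) * v (K ∪ S', L \ T') =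
      ∑ p ∈ univ.filter (fun p : Finset V × Finset V =>
          Disjoint p.1 p.2 ∧
          S ⊆ p.1 ∧ p.2 ⊆ (S ∪ T)ᶜ ∧
          p.1 ⊆ S ∪ K ∧ L \ T ⊆ p.2),
        biMobius v p.1 p.2 := by
  classical
  set sgn : Finset V → Finset V → ℝ :=
    fun B B' => (-1 : ℝ) ^ ((S \ B).card + (B' ∩ (S ∪ T)).card) with hsgn
  -- the key pointwise computation
  have key : ∀ B B' : Finset V,
      (∑ pq : Finset V × Finset V,
        if ((Disjoint pq.1 pq.2 ∧ S ⊆ pq.1 ∧ pq.2 ⊆ (S ∪ T)ᶜ ∧ pq.1 ⊆ S ∪ K ∧ L \ T ⊆ pq.2) ∧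
            B ⊆ pq.1 ∧ B' ⊆ pq.1ᶜ ∧ pq.2 ⊆ B') then
          (-1 : ℝ) ^ ((pq.1 \ B).card + (B' \ pq.2).card) * v (B, B') else 0)
      = (if ((K ⊆ B ∧ B ⊆ S ∪ K) ∧ (L \ T ⊆ B' ∧ B' ⊆ L)) then sgn B B' else 0) * v (B, B') := by
    intro B B'
    rw [Fintype.sum_prod_type]
    have step1 : ∀ P Q : Finset V,
        (if ((Disjoint P Q ∧ S ⊆ P ∧ Q ⊆ (S ∪ T)ᶜ ∧ P ⊆ S ∪ K ∧ L \ T ⊆ Q) ∧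
            B ⊆ P ∧ B' ⊆ Pᶜ ∧ Q ⊆ B') then
          (-1 : ℝ) ^ ((P \ B).card + (B' \ Q).card) * v (B, B') else 0)
        = (if S ∪ B ⊆ P ∧ P ⊆ (S ∪ K) \ B' then (-1 : ℝ) ^ (P \ B).card else 0) *
          ((if L \ T ⊆ Q ∧ Q ⊆ B' \ (S ∪ T) then (-1 : ℝ) ^ (B' \ Q).card else 0) *
            v (B, B')) := by
      intro P Q
      rw [if_congr (condPQ S T K L B B' P Q) rfl rfl]
      by_cases h1 : S ∪ B ⊆ P ∧ P ⊆ (S ∪ K) \ B' <;>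
        by_cases h2 : L \ T ⊆ Q ∧ Q ⊆ B' \ (S ∪ T) <;>
        simp [h1, h2, pow_add, mul_assoc]
    refine Eq.trans (Finset.sum_congr rfl fun P _ =>
      (Finset.sum_congr rfl fun Q _ => step1 P Q)) ?_
    have inner : ∀ P : Finset V,
        (∑ Q : Finset V,
          (if S ∪ B ⊆ P ∧ P ⊆ (S ∪ K) \ B' then (-1 : ℝ) ^ (P \ B).card else 0) *
          ((if L \ T ⊆ Q ∧ Q ⊆ B' \ (S ∪ T) then (-1 : ℝ) ^ (B' \ Q).card else 0) * v (B, B')))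
        = (if S ∪ B ⊆ P ∧ P ⊆ (S ∪ K) \ B' then (-1 : ℝ) ^ (P \ B).card else 0) *
          ((∑ Q : Finset V, (if L \ T ⊆ Q ∧ Q ⊆ B' \ (S ∪ T) then (-1 : ℝ) ^ (B' \ Q).card else 0))
            * v (B, B')) := by
      intro P
      rw [← Finset.mul_sum, ← Finset.sum_mul]
    rw [Finset.sum_congr rfl fun P _ => inner P]
    rw [← Finset.sum_mul]
    rw [sum_Icc_ite (S ∪ B) ((S ∪ K) \ B') (fun P => (-1 : ℝ) ^ (P \ B).card),
        sum_Icc_ite (L \ T) (B' \ (S ∪ T)) (fun Q => (-1 : ℝ) ^ (B' \ Q).card)]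
    rw [altA (S ∪ B) ((S ∪ K) \ B') B Finset.subset_union_right,
        altB (L \ T) (B' \ (S ∪ T)) B' Finset.sdiff_subset]
    rw [if_congr (Iff.symm (condBB' hKL hKS hLS hTL B B')) rfl rfl,
        Finset.union_sdiff_right, Finset.sdiff_sdiff_self_left]
    by_cases h1 : S ∪ B = (S ∪ K) \ B' <;> by_cases h2 : L \ T = B' \ (S ∪ T) <;>
      simp [h1, h2, hsgn, pow_add, mul_assoc]
  -- RHS equals the canonical double sum
  have hbi : ∀ P Q : Finset V, biMobius v P Q
      = ∑ bb' : Finset V × Finset V,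
          if (bb'.1 ⊆ P ∧ bb'.2 ⊆ Pᶜ ∧ Q ⊆ bb'.2) then
            (-1 : ℝ) ^ ((P \ bb'.1).card + (bb'.2 \ Q).card) * v bb' else 0 := by
    intro P Q
    rw [biMobius]
    rw [show P.powerset = univ.filter (fun B => B ⊆ P) from by ext x; simp,
        show (Pᶜ).powerset.filter (fun B' => Q ⊆ B')
          = univ.filter (fun B' => B' ⊆ Pᶜ ∧ Q ⊆ B') from by ext x; simp]
    rw [Finset.sum_filter, Fintype.sum_prod_type]
    refine Finset.sum_congr rfl fun B _ => ?_
    rw [Finset.sum_filter]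
    split_ifs with h
    · exact Finset.sum_congr rfl fun B' _ => (if_congr (and_iff_right h) rfl rfl).symm
    · symm
      refine Finset.sum_eq_zero fun B' _ => ?_
      rw [if_neg]
      tauto
  have hR : (∑ p ∈ univ.filter (fun p : Finset V × Finset V =>
          Disjoint p.1 p.2 ∧ S ⊆ p.1 ∧ p.2 ⊆ (S ∪ T)ᶜ ∧ p.1 ⊆ S ∪ K ∧ L \ T ⊆ p.2),
        biMobius v p.1 p.2)
      = ∑ B : Finset V, ∑ B' : Finset V,
          (if ((K ⊆ B ∧ B ⊆ S ∪ K) ∧ (L \ T ⊆ B' ∧ B' ⊆ L)) then sgn B B' else 0) * v (B, B') := by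
    rw [Finset.sum_filter]
    calc
      ∑ pq : Finset V × Finset V,
          (if (Disjoint pq.1 pq.2 ∧ S ⊆ pq.1 ∧ pq.2 ⊆ (S ∪ T)ᶜ ∧ pq.1 ⊆ S ∪ K ∧ L \ T ⊆ pq.2)
            then biMobius v pq.1 pq.2 else 0)
        = ∑ pq : Finset V × Finset V, ∑ bb' : Finset V × Finset V,
            (if ((Disjoint pq.1 pq.2 ∧ S ⊆ pq.1 ∧ pq.2 ⊆ (S ∪ T)ᶜ ∧ pq.1 ⊆ S ∪ K ∧ L \ T ⊆ pq.2) ∧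
                bb'.1 ⊆ pq.1 ∧ bb'.2 ⊆ pq.1ᶜ ∧ pq.2 ⊆ bb'.2) then
              (-1 : ℝ) ^ ((pq.1 \ bb'.1).card + (bb'.2 \ pq.2).card) * v bb' else 0) := by
          refine Finset.sum_congr rfl fun pq _ => ?_
          split_ifs with h
          · rw [hbi pq.1 pq.2]
            exact Finset.sum_congr rfl fun bb' _ => (if_congr (and_iff_right h) rfl rfl).symm
          · symm
            refine Finset.sum_eq_zero fun bb' _ => ?_
            rw [if_neg]
            tauto
      _ = ∑ bb' : Finset V × Finset V, ∑ pq : Finset V × Finset V,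
            (if ((Disjoint pq.1 pq.2 ∧ S ⊆ pq.1 ∧ pq.2 ⊆ (S ∪ T)ᶜ ∧ pq.1 ⊆ S ∪ K ∧ L \ T ⊆ pq.2) ∧
                bb'.1 ⊆ pq.1 ∧ bb'.2 ⊆ pq.1ᶜ ∧ pq.2 ⊆ bb'.2) then
              (-1 : ℝ) ^ ((pq.1 \ bb'.1).card + (bb'.2 \ pq.2).card) * v bb' else 0) :=
          Finset.sum_comm
      _ = ∑ B : Finset V, ∑ B' : Finset V,
          (if ((K ⊆ B ∧ B ⊆ S ∪ K) ∧ (L \ T ⊆ B' ∧ B' ⊆ L)) then sgn B B' else 0) * v (B, B') := by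
          rw [Fintype.sum_prod_type]
          exact Finset.sum_congr rfl fun B _ => Finset.sum_congr rfl fun B' _ => key B B'
  rw [hR]
  -- now canonical double sum equals nested Icc sums
  have hC : (∑ B : Finset V, ∑ B' : Finset V,
          (if ((K ⊆ B ∧ B ⊆ S ∪ K) ∧ (L \ T ⊆ B' ∧ B' ⊆ L)) then sgn B B' else 0) * v (B, B'))
      = ∑ B ∈ Finset.Icc K (S ∪ K), ∑ B' ∈ Finset.Icc (L \ T) L, sgn B B' * v (B, B') := by
    refine Eq.trans (Finset.sum_congr rfl fun B _ => ?_)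
      (sum_Icc_ite K (S ∪ K) (fun B => ∑ B' ∈ Finset.Icc (L \ T) L, sgn B B' * v (B, B')))
    by_cases h1 : K ⊆ B ∧ B ⊆ S ∪ K
    · simp only [h1, true_and, if_true]
      refine Eq.trans (Finset.sum_congr rfl fun B' _ => ?_)
        (sum_Icc_ite (L \ T) L (fun B' => sgn B B' * v (B, B')))
      split_ifs <;> ring
    · simp [h1]
  rw [hC]
  -- finally the left side via a bijection
  refine Finset.sum_nbij' (fun S' => K ∪ S') (fun B => B \ K) ?_ ?_ ?_ ?_ ?_
  · intro S' hS'
    rw [Finset.mem_powerset] at hS'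
    rw [Finset.mem_Icc]
    exact ⟨Finset.subset_union_left,
      Finset.union_subset Finset.subset_union_right (hS'.trans Finset.subset_union_left)⟩
  · intro B hB
    rw [Finset.mem_Icc] at hB
    rw [Finset.mem_powerset]
    intro x hx
    rw [Finset.mem_sdiff] at hx
    rcases Finset.mem_union.1 (hB.2 hx.1) with h | h
    · exact h
    · exact absurd h hx.2
  · intro S' hS'
    rw [Finset.mem_powerset] at hS'
    exact Finset.union_sdiff_cancel_left (hKS.mono_right hS')
  · intro B hB
    rw [Finset.mem_Icc] at hB
    exact Finset.union_sdiff_of_subset hB.1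
  · intro S' hS'
    rw [Finset.mem_powerset] at hS'
    refine Finset.sum_nbij' (fun T' => L \ T') (fun B' => L \ B') ?_ ?_ ?_ ?_ ?_
    · intro T' hT'
      rw [Finset.mem_powerset] at hT'
      rw [Finset.mem_Icc]
      exact ⟨sdiff_le_sdiff le_rfl hT', Finset.sdiff_subset⟩
    · intro B' hB'
      rw [Finset.mem_Icc] at hB'
      rw [Finset.mem_powerset]
      intro x hx
      rw [Finset.mem_sdiff] at hx
      by_contra hxT
      exact hx.2 (hB'.1 (Finset.mem_sdiff.2 ⟨hx.1, hxT⟩))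
    · intro T' hT'
      rw [Finset.mem_powerset] at hT'
      exact Finset.sdiff_sdiff_eq_self (hT'.trans hTL)
    · intro B' hB'
      rw [Finset.mem_Icc] at hB'
      exact Finset.sdiff_sdiff_eq_self hB'.2
    · intro T' hT'
      rw [Finset.mem_powerset] at hT'
      congr 1
      rw [hsgn]
      congr 1
      have e1 : S \ (K ∪ S') = S \ S' := by
        have dSK := Finset.disjoint_left.1 hKS.symm
        ext x
        simp only [Finset.mem_sdiff, Finset.mem_union]
        constructor
        · rintro ⟨h1, h2⟩; exact ⟨h1, fun h => h2 (Or.inr h)⟩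
        · rintro ⟨h1, h2⟩; exact ⟨h1, fun h => h.elim (dSK h1) h2⟩
      have e2 : (L \ T') ∩ (S ∪ T) = T \ T' := by
        have dLS' := Finset.disjoint_left.1 hLS
        ext x
        simp only [Finset.mem_inter, Finset.mem_sdiff, Finset.mem_union]
        constructor
        · rintro ⟨⟨h1, h2⟩, h3⟩
          exact ⟨h3.resolve_left (dLS' h1), h2⟩
        · rintro ⟨h1, h2⟩
          exact ⟨⟨hTL h1, h2⟩, Or.inr h1⟩
      rw [e1, e2, Finset.card_sdiff_of_subset hS', Finset.card_sdiff_of_subset hT']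
end

section
/- For integers 0 ≤ k < n, ∑_{i=0}^{k} (n-i-1)!·k! / (n!·(k-i)!) = 1/(n-k). -/
open Finset

/-- for 0 ≤ k < n, ∑_{i=0}^{k} (n-i-1)!·k!/(n!·(k-i)!) = 1/(n-k). -/
theorem stmt_18 (n k : ℕ) (h : k < n) :
    ∑ i ∈ Finset.range (k + 1),
        ((Nat.factorial (n - i - 1) * Nat.factorial k : ℚ) /
          (Nat.factorial n * Nat.factorial (k - i))) =
      1 / ((n : ℚ) - (k : ℚ)) := by
  have hnk : ((n : ℚ) - (k : ℚ)) ≠ 0 := by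
    have : (k : ℚ) < n := by exact_mod_cast h
    linarith
  set a : ℕ → ℚ := fun i => if i ≤ k then
      ((Nat.factorial (n - i) * Nat.factorial k : ℚ) /
        (((n : ℚ) - (k : ℚ)) * Nat.factorial n * Nat.factorial (k - i)))
    else 0 with ha
  have key : ∀ i ∈ Finset.range (k + 1),
      ((Nat.factorial (n - i - 1) * Nat.factorial k : ℚ) /
        (Nat.factorial n * Nat.factorial (k - i))) = a i - a (i + 1) := by
    intro i hi
    have hik : i ≤ k := by simpa [Nat.lt_succ_iff] using hi
    have hin : i < n := lt_of_le_of_lt hik h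
    have hfn : (Nat.factorial n : ℚ) ≠ 0 := by positivity
    have hfk : (Nat.factorial k : ℚ) ≠ 0 := by positivity
    have hni : Nat.factorial (n - i) = (n - i) * Nat.factorial (n - i - 1) := by
      have : n - i = (n - i - 1) + 1 := by omega
      rw [this, Nat.factorial_succ]; simp
    have hniQ : ((n : ℚ) - i) = ((n - i : ℕ) : ℚ) := by
      push_cast [Nat.cast_sub hin.le]; ring
    rcases eq_or_lt_of_le hik with rfl | hlt
    · -- i = k
      simp only [ha, le_refl, if_pos, Nat.sub_self, Nat.factorial_zero]
      rw [if_neg (by omega)]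
      rw [hni]
      push_cast
      rw [← hniQ]
      field_simp
      ring
    · -- i < k
      have hki : Nat.factorial (k - i) = (k - i) * Nat.factorial (k - i - 1) := by
        have : k - i = (k - i - 1) + 1 := by omega
        rw [this, Nat.factorial_succ]; simp
      have hkiQ : ((k : ℚ) - i) = ((k - i : ℕ) : ℚ) := by
        push_cast [Nat.cast_sub hik]; ring
      have h1 : n - (i + 1) = n - i - 1 := by omega
      have h2 : k - (i + 1) = k - i - 1 := by omega
      have hfki : (Nat.factorial (k - i - 1) : ℚ) ≠ 0 := by positivity
      have hfnii : (Nat.factorial (n - i - 1) : ℚ) ≠ 0 := by positivity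
      have hkiQne : ((k : ℚ) - i) ≠ 0 := by
        have : (i : ℚ) < k := by exact_mod_cast hlt
        linarith
      rw [ha]
      simp only [if_pos hik, if_pos (by omega : i + 1 ≤ k), h1, h2, hni, hki]
      push_cast
      rw [← hniQ, ← hkiQ]
      field_simp
      ring
  rw [Finset.sum_congr rfl key, Finset.sum_range_sub']
  simp only [ha, if_pos (Nat.zero_le k), if_neg (by omega : ¬ (k + 1 ≤ k)),
    Nat.sub_zero, sub_zero]
  field_simp
end
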